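/- Exact characterization of approximate DP via privacy loss: a randomized mechanism M : 𝒳ⁿ → Y (with Y finite) satisfies (ε, δ⃗)-DP if and only if for every index i and every pair of datasets x, x′ differing in coordinate i, δ⃗(i) ≥ E_{Z ∼ PrivLoss(M(x) ‖ M(x′))}[max{0, 1 − e^{ε − Z}}]. Equivalently, sup_{E ⊆ Y} (Pr(M(x) ∈ E) − e^ε Pr(M(x′) ∈ E)) = E_{Y ∼ M(x)}[max{0, 1 − e^{ε − f(Y)}}] where f(y) = log(Pr(M(x)=y)/Pr(M(x′)=y)). -/
import Mathlib


open Finset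

lemma term_eq {a b ε : ℝ} (ha : 0 < a) (hb : 0 < b) :
    a * max 0 (1 - Real.exp (ε - Real.log (a / b))) = max 0 (a - Real.exp ε * b) := by
  have h : Real.exp (ε - Real.log (a / b)) = Real.exp ε * (b / a) := by
    rw [Real.exp_sub, Real.exp_log (div_pos ha hb)]
    field_simp
  rw [h, mul_max_of_nonneg _ _ ha.le, mul_zero]
  congr 1
  field_simp

/-- Exact characterization of approximate DP via the privacy loss: `M` satisfies
`(ε, δ⃗)`-DP iff for every pair of neighboring datasets
`δ⃗ i ≥ E_{Y ∼ M x}[max {0, 1 − e^{ε − f(Y)}}]` where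
`f y = log (M x y / M x' y)`; moreover that expectation is the greatest value of
`Pr(M x ∈ E) − e^ε Pr(M x' ∈ E)` over events `E`. -/
theorem stmt9 {X Y : Type*} [Fintype Y] {n : ℕ}
    (M : (Fin n → X) → Y → ℝ)
    (hMpos : ∀ x y, 0 < M x y) (hM1 : ∀ x, ∑ y, M x y = 1)
    (ε : ℝ) (hε : 0 ≤ ε) (δ : Fin n → ℝ) :
    ((∀ (i : Fin n) (x x' : Fin n → X), (∀ j, j ≠ i → x j = x' j) →
        ∀ E : Finset Y, ∑ y ∈ E, M x y ≤ Real.exp ε * ∑ y ∈ E, M x' y + δ i)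
      ↔ (∀ (i : Fin n) (x x' : Fin n → X), (∀ j, j ≠ i → x j = x' j) →
          ∑ y, M x y * max 0 (1 - Real.exp (ε - Real.log (M x y / M x' y))) ≤ δ i))
    ∧ (∀ x x' : Fin n → X,
        IsGreatest {v : ℝ | ∃ E : Finset Y, v = ∑ y ∈ E, M x y - Real.exp ε * ∑ y ∈ E, M x' y}
          (∑ y, M x y * max 0 (1 - Real.exp (ε - Real.log (M x y / M x' y))))) := by
  have key : ∀ x x' : Fin n → X,
      ∑ y, M x y * max 0 (1 - Real.exp (ε - Real.log (M x y / M x' y)))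
        = ∑ y, max 0 (M x y - Real.exp ε * M x' y) := by
    intro x x'
    exact Finset.sum_congr rfl fun y _ => term_eq (hMpos x y) (hMpos x' y)
  have hgreat : ∀ x x' : Fin n → X,
      IsGreatest {v : ℝ | ∃ E : Finset Y, v = ∑ y ∈ E, M x y - Real.exp ε * ∑ y ∈ E, M x' y}
        (∑ y, M x y * max 0 (1 - Real.exp (ε - Real.log (M x y / M x' y)))) := by
    intro x x'
    rw [key]
    constructor
    · refine ⟨Finset.univ.filter (fun y => Real.exp ε * M x' y < M x y), ?_⟩
      rw [Finset.mul_sum, ← Finset.sum_sub_distrib]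
      rw [← Finset.sum_filter_of_ne (p := fun y => Real.exp ε * M x' y < M x y)]
      · exact Finset.sum_congr rfl fun y hy => by
          rw [max_eq_right (by linarith [(Finset.mem_filter.mp hy).2])]
      · intro y _ hne
        by_contra h
        push_neg at h
        exact hne (by rw [max_eq_left (by linarith)])
    · rintro v ⟨E, rfl⟩
      rw [Finset.mul_sum, ← Finset.sum_sub_distrib]
      calc ∑ y ∈ E, (M x y - Real.exp ε * M x' y)
          ≤ ∑ y ∈ E, max 0 (M x y - Real.exp ε * M x' y) :=
            Finset.sum_le_sum fun y _ => le_max_right _ _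
        _ ≤ ∑ y, max 0 (M x y - Real.exp ε * M x' y) :=
            Finset.sum_le_sum_of_subset_of_nonneg (Finset.subset_univ E)
              (fun y _ _ => le_max_left _ _)
  refine ⟨⟨fun hDP i x x' hne => ?_, fun hPL i x x' hne E => ?_⟩, hgreat⟩
  · obtain ⟨⟨E, hE⟩, _⟩ := hgreat x x'
    rw [hE]
    linarith [hDP i x x' hne E]
  · have := (hgreat x x').2 ⟨E, rfl⟩
    linarith [hPL i x x' hne]
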